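/- Let M, m be integers with 1 ≤ m ≤ M, let c > 0, and set ϖ₅ = M!/((m−1)!(M−m)!). Then lim_{ρ→∞} ρ^m · ϖ₅ · Σ_{i=0}^{m−1} C(m−1, i)·(−1)^i·(1 − e^{−c(M−m+i+1)/ρ})/(M−m+i+1) = ϖ₅·c^m/m. In particular the expression decays exactly like ρ^{−m} as ρ → ∞. -/

import Mathlib

open Filter Real Topology

/-- Let `1 ≤ m ≤ M`, `c > 0`, `ϖ₅ = M!/((m−1)!(M−m)!)`. Then
`ρ^m · ϖ₅ Σ_{i=0}^{m−1} C(m−1,i)(−1)^i (1 − e^{−c(M−m+i+1)/ρ})/(M−m+i+1) → ϖ₅ c^m/m`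
as `ρ → ∞`, i.e. the probability `P(R_m > R̄_m)` decays exactly like `ρ^{−m}`. -/
theorem weak_user_probability_high_snr (M m : ℕ) (hm : 1 ≤ m) (hmM : m ≤ M)
    (c : ℝ) (hc : 0 < c) :
    Tendsto (fun ρ : ℝ =>
        ρ ^ m * (((M.factorial : ℝ) / (((m - 1).factorial : ℝ) * ((M - m).factorial : ℝ))) *
          ∑ i ∈ Finset.range m,
            ((m - 1).choose i : ℝ) * (-1) ^ i *
              (1 - Real.exp (-(c * ((M : ℝ) - m + i + 1)) / ρ)) / ((M : ℝ) - m + i + 1)))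
      atTop
      (nhds (((M.factorial : ℝ) / (((m - 1).factorial : ℝ) * ((M - m).factorial : ℝ))) *
        c ^ m / m)) := by
  obtain ⟨n, rfl⟩ : ∃ n, m = n + 1 := ⟨m - 1, (Nat.succ_pred_eq_of_pos hm).symm⟩
  set K : ℝ := ((M.factorial : ℝ) / (((n + 1 - 1).factorial : ℝ) * ((M - (n+1)).factorial : ℝ)))
  set b : ℝ := (M : ℝ) - (n + 1 : ℕ) + 1 with hb_def
  have hb : (1 : ℝ) ≤ b := by
    have : ((n:ℝ) + 1) ≤ (M : ℝ) := by exact_mod_cast hmM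
    simp only [hb_def]
    push_cast
    linarith
  have hbi : ∀ i : ℕ, (0 : ℝ) < b + i := fun i => by positivity
  set g : ℝ → ℝ := fun x => ∑ i ∈ Finset.range (n+1),
      ((n.choose i : ℝ) * (-1)^i * (1 - Real.exp (-((b+i)*x)))) / (b+i) with hg_def
  -- derivative of g
  have hderiv : ∀ x : ℝ, HasDerivAt g (Real.exp (-(b*x)) * (1 - Real.exp (-x))^n) x := by
    intro x
    have key : ∑ i ∈ Finset.range (n+1),
        ((n.choose i : ℝ) * (-1)^i * Real.exp (-((b+i)*x)))
        = Real.exp (-(b*x)) * (1 - Real.exp (-x))^n := by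
      have h1 : (1 : ℝ) - Real.exp (-x) = (-Real.exp (-x)) + 1 := by ring
      rw [h1, add_pow, Finset.mul_sum]
      refine Finset.sum_congr rfl fun i hi => ?_
      have hpow : (-Real.exp (-x) : ℝ)^i = (-1)^i * Real.exp ((i:ℝ) * -x) := by
        rw [Real.exp_nat_mul]; exact neg_pow _ _
      rw [hpow, show -((b+(i:ℝ))*x) = -(b*x) + (i:ℝ) * -x by ring, Real.exp_add]
      ring
    have hsum : HasDerivAt g (∑ i ∈ Finset.range (n+1),
        ((n.choose i : ℝ) * (-1)^i * Real.exp (-((b+i)*x)))) x := by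
      apply HasDerivAt.fun_sum
      intro i _
      have ha : (b + i) ≠ 0 := (hbi i).ne'
      have h1 : HasDerivAt (fun x : ℝ => -((b+i)*x)) (-(b+i)) x := by
        simpa using ((hasDerivAt_id x).const_mul (b+i)).fun_neg
      have h2 : HasDerivAt (fun x : ℝ => Real.exp (-((b+i)*x)))
          (Real.exp (-((b+i)*x)) * (-(b+i))) x := h1.exp
      have h3 : HasDerivAt (fun x : ℝ => (n.choose i : ℝ) * (-1)^i * (1 - Real.exp (-((b+i)*x))))
          ((n.choose i : ℝ) * (-1)^i * (-(Real.exp (-((b+i)*x)) * (-(b+i))))) x :=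
        (h2.const_sub 1).const_mul _
      have h4 := h3.div_const (b+i)
      convert h4 using 1
      · rfl
      field_simp
    rw [key] at hsum
    exact hsum
  have hg0 : g 0 = 0 := by simp [hg_def]
  -- L'Hopital limit
  have hlim : Tendsto (fun x => g x / x ^ (n+1)) (𝓝[>] (0:ℝ)) (𝓝 (1 / ((n:ℝ)+1))) := by
    have hff' : ∀ᶠ x in 𝓝[>] (0:ℝ),
        HasDerivAt g (Real.exp (-(b*x)) * (1 - Real.exp (-x))^n) x :=
      Eventually.of_forall fun x => hderiv x
    have hgg' : ∀ᶠ x in 𝓝[>] (0:ℝ),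
        HasDerivAt (fun x : ℝ => x ^ (n+1)) ((((n:ℝ)+1)) * x ^ n) x := by
      refine Eventually.of_forall fun x => ?_
      have := hasDerivAt_pow (n+1) x
      simpa [Nat.cast_add] using this
    have hg' : ∀ᶠ x in 𝓝[>] (0:ℝ), (((n:ℝ)+1)) * x ^ n ≠ 0 := by
      filter_upwards [self_mem_nhdsWithin] with x hx
      have hx : (0:ℝ) < x := hx
      positivity
    have hfa : Tendsto g (𝓝[>] (0:ℝ)) (𝓝 0) := by
      have h := (hderiv 0).continuousAt.continuousWithinAt (s := Set.Ioi (0:ℝ))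
      simpa [ContinuousWithinAt, hg0] using h
    have hga : Tendsto (fun x : ℝ => x ^ (n+1)) (𝓝[>] (0:ℝ)) (𝓝 0) := by
      have : Tendsto (fun x : ℝ => x ^ (n+1)) (𝓝 (0:ℝ)) (𝓝 ((0:ℝ)^(n+1))) :=
        (continuous_pow (n+1)).tendsto 0
      simpa [zero_pow] using this.mono_left nhdsWithin_le_nhds
    have hdiv : Tendsto (fun x => Real.exp (-(b*x)) * (1 - Real.exp (-x))^n / ((((n:ℝ)+1)) * x ^ n))
        (𝓝[>] (0:ℝ)) (𝓝 (1 / ((n:ℝ)+1))) := by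
      have hslope : Tendsto (fun x : ℝ => (1 - Real.exp (-x)) / x) (𝓝[>] (0:ℝ)) (𝓝 1) := by
        have hd : HasDerivAt (fun x : ℝ => 1 - Real.exp (-x)) 1 0 := by
          have h1 : HasDerivAt (fun x : ℝ => Real.exp (-x)) (-1) 0 := by
            simpa using (hasDerivAt_id (0:ℝ)).neg.exp
          simpa using h1.const_sub 1
        have h2 := hasDerivAt_iff_tendsto_slope.mp hd
        have h3 := h2.mono_left (nhdsWithin_mono _ (fun x hx => ne_of_gt hx))
        refine h3.congr' ?_
        filter_upwards [self_mem_nhdsWithin] with x hx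
        simp [slope_def_field]
      have hexp : Tendsto (fun x : ℝ => Real.exp (-(b*x))) (𝓝[>] (0:ℝ)) (𝓝 1) := by
        have h : ContinuousAt (fun x : ℝ => Real.exp (-(b*x))) 0 := by fun_prop
        have h2 := h.tendsto.mono_left (nhdsWithin_le_nhds (s := Set.Ioi (0:ℝ)))
        simpa using h2
      have hmain : Tendsto
          (fun x : ℝ => Real.exp (-(b*x)) * ((1 - Real.exp (-x))/x)^n / ((n:ℝ)+1))
          (𝓝[>] (0:ℝ)) (𝓝 (1 / ((n:ℝ)+1))) := by
        have h := (hexp.mul (hslope.pow n)).div_const ((n:ℝ)+1)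
        simpa using h
      refine hmain.congr' ?_
      filter_upwards [self_mem_nhdsWithin] with x hx
      have hx : (0:ℝ) < x := hx
      rw [div_pow, ← mul_div_assoc, div_div, mul_comm (x^n) ((n:ℝ)+1)]
    exact HasDerivAt.lhopital_zero_nhdsGT hff' hgg' hg' hfa hga hdiv
  -- compose with ρ ↦ c/ρ
  have hcomp : Tendsto (fun ρ : ℝ => c / ρ) atTop (𝓝[>] (0:ℝ)) := by
    rw [tendsto_nhdsWithin_iff]
    constructor
    · exact tendsto_const_nhds.div_atTop tendsto_id
    · filter_upwards [eventually_gt_atTop (0:ℝ)] with ρ hρ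
      exact div_pos hc hρ
  have hfinal : Tendsto (fun ρ : ℝ => K * c^(n+1) * (g (c/ρ) / (c/ρ)^(n+1)))
      atTop (𝓝 (K * c^(n+1) * (1/((n:ℝ)+1)))) :=
    tendsto_const_nhds.mul (hlim.comp hcomp)
  have heq : (fun ρ : ℝ => K * c^(n+1) * (g (c/ρ) / (c/ρ)^(n+1))) =ᶠ[atTop]
      (fun ρ : ℝ =>
        ρ ^ (n+1) * (K * ∑ i ∈ Finset.range (n+1),
            (((n+1-1).choose i : ℝ)) * (-1) ^ i *
              (1 - Real.exp (-(c * ((M : ℝ) - (n+1:ℕ) + i + 1)) / ρ)) /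
                ((M : ℝ) - (n+1:ℕ) + i + 1))) := by
    filter_upwards [eventually_gt_atTop (0:ℝ)] with ρ hρ
    have hρ0 : ρ ≠ 0 := hρ.ne'
    have hsum_eq : g (c/ρ) = ∑ i ∈ Finset.range (n+1),
        (((n+1-1).choose i : ℝ)) * (-1) ^ i *
          (1 - Real.exp (-(c * ((M : ℝ) - (n+1:ℕ) + i + 1)) / ρ)) /
            ((M : ℝ) - (n+1:ℕ) + i + 1) := by
      refine Finset.sum_congr rfl fun i hi => ?_
      have h1 : (M : ℝ) - (n+1:ℕ) + i + 1 = b + i := by rw [hb_def]; ring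
      rw [h1]
      have h2 : -((b+(i:ℝ))*(c/ρ)) = -(c * (b+(i:ℝ)))/ρ := by
        rw [show (b+(i:ℝ))*(c/ρ) = c*(b+(i:ℝ))/ρ by ring, neg_div]
      simp only [Nat.add_sub_cancel]
      rw [← h2]
    rw [hsum_eq, div_pow]
    have hρn : ρ ^ (n+1) ≠ 0 := by positivity
    field_simp
  have hres := hfinal.congr' heq
  have hval : K * c^(n+1) * (1/((n:ℝ)+1)) = K * c ^ (n+1) / ((n+1 : ℕ) : ℝ) := by
    push_cast; ring
  rw [hval] at hres
  exact hres
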